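/- Let I ⊆ ℝ be an unbounded non-degenerate closed interval, V ⊂ ℝ[t] finite-dimensional, P = {f ∈ V : f ≥ 0 on I}, and let f ∈ P span an extreme ray of P with d = deg(f). Setting V_d = {g ∈ V : deg(g) ≤ d}, the polynomial f has at least dim(V_d) − 1 roots in I counted with multiplicity. -/

import Mathlib

open Polynomial Filter Topology

private lemma bdd_Ici {φ : ℝ → ℝ} {a L : ℝ} (hc : ContinuousOn φ (Set.Ici a))
    (ht : Filter.Tendsto φ Filter.atTop (nhds L)) :
    ∃ C, ∀ x ∈ Set.Ici a, |φ x| ≤ C := by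
  have h1 : ∀ᶠ x in atTop, |φ x| ≤ |L| + 1 := by
    filter_upwards [ht.abs.eventually (eventually_le_nhds (lt_add_one |L|))] with x hx using hx
  obtain ⟨b, hb⟩ := eventually_atTop.mp h1
  obtain ⟨M, hM⟩ := (isCompact_Icc (a := a) (b := max a b)).exists_bound_of_continuousOn
    (hc.mono (fun x hx => hx.1))
  refine ⟨max M (|L| + 1), fun x hx => ?_⟩
  rcases le_total x (max a b) with h | h
  · exact le_max_of_le_left (hM x ⟨hx, h⟩)
  · exact le_max_of_le_right (hb x ((le_max_right a b).trans h))

private lemma ratio_bdd_Ici (h q : ℝ[X]) (a : ℝ) (hq : ∀ x ∈ Set.Ici a, q.eval x ≠ 0)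
    (hdeg : h.degree ≤ q.degree) :
    ∃ C, ∀ x ∈ Set.Ici a, |h.eval x| ≤ C * |q.eval x| := by
  obtain ⟨L, hL⟩ : ∃ L, Tendsto (fun x => h.eval x / q.eval x) atTop (𝓝 L) := by
    rcases lt_or_eq_of_le hdeg with hlt | heq
    · exact ⟨0, Polynomial.div_tendsto_zero_of_degree_lt h q hlt⟩
    · exact ⟨_, Polynomial.div_tendsto_leadingCoeff_div_of_degree_eq h q heq⟩
  have hc : ContinuousOn (fun x => h.eval x / q.eval x) (Set.Ici a) :=
    (h.continuous_aeval.continuousOn).div (q.continuous_aeval.continuousOn) hq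
  obtain ⟨C, hC⟩ := bdd_Ici hc hL
  refine ⟨C, fun x hx => ?_⟩
  have := hC x hx
  have hqx := hq x hx
  calc |h.eval x| = |h.eval x / q.eval x| * |q.eval x| := by
        rw [← abs_mul, div_mul_cancel₀ _ hqx]
    _ ≤ C * |q.eval x| := mul_le_mul_of_nonneg_right this (abs_nonneg _)

private lemma ratio_bdd_Iic (h q : ℝ[X]) (a : ℝ) (hq : ∀ x ∈ Set.Iic a, q.eval x ≠ 0)
    (hdeg : h.degree ≤ q.degree) :
    ∃ C, ∀ x ∈ Set.Iic a, |h.eval x| ≤ C * |q.eval x| := by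
  by_cases hh0 : h = 0
  · exact ⟨0, by simp [hh0]⟩
  have hq0 : q ≠ 0 := fun h0 => hq a Set.self_mem_Iic (by simp [h0])
  set H := h.comp (-X) with hH
  set Q := q.comp (-X) with hQ
  have hHev : ∀ x : ℝ, H.eval x = h.eval (-x) := fun x => by simp [hH, eval_comp]
  have hQev : ∀ x : ℝ, Q.eval x = q.eval (-x) := fun x => by simp [hQ, eval_comp]
  have hH0 : H ≠ 0 := by
    intro h0
    exact hh0 (h.zero_of_eval_zero fun x => by
      have := hHev (-x); rw [h0] at this; simpa using this.symm)
  have hQ0 : Q ≠ 0 := by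
    intro h0
    exact hq0 (q.zero_of_eval_zero fun x => by
      have := hQev (-x); rw [h0] at this; simpa using this.symm)
  have hnd : ∀ p : ℝ[X], (p.comp (-X)).natDegree = p.natDegree := fun p => by
    rw [natDegree_comp]; simp
  have hdeg' : H.degree ≤ Q.degree := by
    rw [degree_eq_natDegree hH0, degree_eq_natDegree hQ0, hH, hQ, hnd, hnd]
    rw [degree_eq_natDegree hh0, degree_eq_natDegree hq0] at hdeg
    exact_mod_cast hdeg
  obtain ⟨C, hC⟩ := ratio_bdd_Ici H Q (-a)
    (fun x hx => by rw [hQev]; exact hq (-x) (Set.mem_Iic.2 (by linarith [Set.mem_Ici.1 hx]))) hdeg'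
  refine ⟨C, fun x hx => ?_⟩
  have := hC (-x) (Set.mem_Ici.2 (by linarith [Set.mem_Iic.1 hx]))
  rwa [hHev, hQev, neg_neg] at this

private lemma ratio_bdd (h q : ℝ[X]) (I : Set ℝ)
    (hI : I = Set.univ ∨ (∃ a, I = Set.Ici a) ∨ ∃ a, I = Set.Iic a)
    (hq : ∀ x ∈ I, q.eval x ≠ 0) (hdeg : h.degree ≤ q.degree) :
    ∃ C, 0 < C ∧ ∀ x ∈ I, |h.eval x| ≤ C * |q.eval x| := by
  obtain ⟨C, hC⟩ : ∃ C, ∀ x ∈ I, |h.eval x| ≤ C * |q.eval x| := by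
    rcases hI with rfl | ⟨a, rfl⟩ | ⟨a, rfl⟩
    · obtain ⟨C₁, h1⟩ := ratio_bdd_Ici h q 0 (fun x _ => hq x trivial) hdeg
      obtain ⟨C₂, h2⟩ := ratio_bdd_Iic h q 0 (fun x _ => hq x trivial) hdeg
      refine ⟨max C₁ C₂, fun x _ => ?_⟩
      rcases le_total 0 x with hx | hx
      · exact (h1 x hx).trans (mul_le_mul_of_nonneg_right (le_max_left _ _) (abs_nonneg _))
      · exact (h2 x hx).trans (mul_le_mul_of_nonneg_right (le_max_right _ _) (abs_nonneg _))
    · exact ratio_bdd_Ici h q a hq hdeg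
    · exact ratio_bdd_Iic h q a hq hdeg
  exact ⟨max C 1, lt_of_lt_of_le one_pos (le_max_right _ _), fun x hx =>
    (hC x hx).trans (mul_le_mul_of_nonneg_right (le_max_left _ _) (abs_nonneg _))⟩

/-- A face of a convex cone `C`. -/
def IsFace (C F : Set (Polynomial ℝ)) : Prop :=
  F ⊆ C ∧ (∀ c : ℝ, 0 ≤ c → ∀ x ∈ F, c • x ∈ F) ∧
    (∀ x ∈ F, ∀ y ∈ F, x + y ∈ F) ∧
    ∀ x ∈ C, ∀ y ∈ C, x + y ∈ F → x ∈ F ∧ y ∈ F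

open Classical in
theorem stmt_5 (V : Submodule ℝ (Polynomial ℝ)) [FiniteDimensional ℝ V]
    (I : Set ℝ)
    (hI : I = Set.univ ∨ (∃ a, I = Set.Ici a) ∨ ∃ a, I = Set.Iic a)
    (f : ℝ[X]) (hfV : f ∈ V) (hf0 : f ≠ 0) (hfP : ∀ x ∈ I, 0 ≤ f.eval x)
    (hface : IsFace {g : ℝ[X] | g ∈ V ∧ ∀ x ∈ I, 0 ≤ g.eval x}
      {g : ℝ[X] | ∃ c : ℝ, 0 ≤ c ∧ g = c • f}) :
    Module.finrank ℝ ↥(V ⊓ Polynomial.degreeLE ℝ f.degree) - 1 ≤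
      Multiset.card (f.roots.filter (· ∈ I)) := by
  set S : Multiset ℝ := f.roots.filter (· ∈ I) with hSdef
  set n : ℕ := Multiset.card S with hndef
  set p : ℝ[X] := (S.map fun s => X - C s).prod with hpdef
  have hple : S ≤ f.roots := f.roots.filter_le _
  have hpm : p.Monic := monic_multiset_prod_of_monic _ _ fun a _ => monic_X_sub_C a
  have hpdvd : p ∣ f :=
    (Multiset.prod_dvd_prod_of_le (Multiset.map_le_map hple)).trans f.prod_multiset_X_sub_C_dvd
  obtain ⟨q, hfq⟩ := hpdvd
  have hq0 : q ≠ 0 := fun h0 => hf0 (by rw [hfq, h0, mul_zero])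
  have hproots : p.roots = S := roots_multiset_prod_X_sub_C S
  have hqI : ∀ x ∈ I, q.eval x ≠ 0 := by
    intro s hs hqs
    have h1 : rootMultiplicity s f = rootMultiplicity s p + rootMultiplicity s q := by
      conv_lhs => rw [hfq]
      exact rootMultiplicity_mul (by rw [← hfq]; exact hf0)
    have h2 : rootMultiplicity s p = rootMultiplicity s f := by
      rw [← count_roots, ← count_roots, hproots, hSdef, Multiset.count_filter_of_pos hs]
    have h3 : 0 < rootMultiplicity s q := (rootMultiplicity_pos hq0).2 hqs
    omega
  set W : Submodule ℝ ℝ[X] := V ⊓ Polynomial.degreeLE ℝ f.degree with hWdef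
  haveI : FiniteDimensional ℝ W := Submodule.finiteDimensional_of_le inf_le_left
  have hpdeg : p.natDegree = n := natDegree_multiset_prod_X_sub_C_eq_card S
  -- kernel elements are multiples of f
  have hker : ∀ g : ℝ[X], g ∈ W → p ∣ g → ∃ c : ℝ, g = c • f := by
    intro g hgW hpg
    obtain ⟨h, hgh⟩ := hpg
    have hgV : g ∈ V := hgW.1
    have hgdeg : g.degree ≤ f.degree := (Polynomial.mem_degreeLE).1 hgW.2
    by_cases hh0 : h = 0
    · exact ⟨0, by rw [hgh, hh0, mul_zero, zero_smul]⟩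
    have hg0 : g ≠ 0 := by rw [hgh]; exact mul_ne_zero hpm.ne_zero hh0
    have hhdeg : h.degree ≤ q.degree := by
      rw [degree_eq_natDegree hh0, degree_eq_natDegree hq0, Nat.cast_le]
      have h1 : g.natDegree ≤ f.natDegree := natDegree_le_natDegree hgdeg
      rw [hgh, hfq, natDegree_mul hpm.ne_zero hh0, natDegree_mul hpm.ne_zero hq0] at h1
      omega
    obtain ⟨Cb, hCb0, hCb⟩ := ratio_bdd h q I hI hqI hhdeg
    set ε : ℝ := Cb⁻¹ with hεdef
    have hε : 0 < ε := inv_pos.2 hCb0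
    have hbound : ∀ x ∈ I, |ε * g.eval x| ≤ f.eval x := by
      intro x hx
      have h1 : |g.eval x| ≤ Cb * f.eval x := by
        have h2 : |g.eval x| = |p.eval x| * |h.eval x| := by rw [hgh, eval_mul, abs_mul]
        have h3 : |p.eval x| * |h.eval x| ≤ |p.eval x| * (Cb * |q.eval x|) :=
          mul_le_mul_of_nonneg_left (hCb x hx) (abs_nonneg _)
        have h4 : |p.eval x| * (Cb * |q.eval x|) = Cb * |f.eval x| := by
          rw [hfq, eval_mul, abs_mul]; ring
        rw [abs_of_nonneg (hfP x hx)] at h4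
        rw [h2]; rw [h4] at h3; exact h3
      rw [abs_mul, abs_of_pos hε]
      calc ε * |g.eval x| ≤ ε * (Cb * f.eval x) := mul_le_mul_of_nonneg_left h1 hε.le
        _ = f.eval x := by rw [hεdef]; field_simp
    have hmemx : f + ε • g ∈ {g : ℝ[X] | g ∈ V ∧ ∀ x ∈ I, 0 ≤ g.eval x} := by
      refine ⟨Submodule.add_mem _ hfV (Submodule.smul_mem _ _ hgV), fun x hx => ?_⟩
      have := (abs_le.1 (hbound x hx)).1
      simp only [eval_add, eval_smul, smul_eq_mul]
      linarith
    have hmemy : f - ε • g ∈ {g : ℝ[X] | g ∈ V ∧ ∀ x ∈ I, 0 ≤ g.eval x} := by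
      refine ⟨Submodule.sub_mem _ hfV (Submodule.smul_mem _ _ hgV), fun x hx => ?_⟩
      have := (abs_le.1 (hbound x hx)).2
      simp only [eval_sub, eval_smul, smul_eq_mul]
      linarith
    have hsum : (f + ε • g) + (f - ε • g) ∈ {g : ℝ[X] | ∃ c : ℝ, 0 ≤ c ∧ g = c • f} := by
      refine ⟨2, by norm_num, ?_⟩
      have : (f + ε • g) + (f - ε • g) = f + f := by abel
      rw [this, two_smul]
    obtain ⟨⟨c, _, hc⟩, -⟩ := hface.2.2.2 _ hmemx _ hmemy hsum
    refine ⟨ε⁻¹ * (c - 1), ?_⟩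
    have h5 : ε • g = (c - 1) • f := by
      rw [sub_smul, one_smul, ← hc]; abel
    calc g = ε⁻¹ • (ε • g) := by rw [smul_smul, inv_mul_cancel₀ hε.ne', one_smul]
      _ = (ε⁻¹ * (c - 1)) • f := by rw [h5, smul_smul]
  -- linear algebra
  have hdegLT : ∀ g : W, (g : ℝ[X]) %ₘ p ∈ Polynomial.degreeLT ℝ n := by
    intro g
    rw [Polynomial.mem_degreeLT]
    calc ((g : ℝ[X]) %ₘ p).degree < p.degree := degree_modByMonic_lt _ hpm
      _ ≤ (n : WithBot ℕ) := by
          rw [degree_eq_natDegree hpm.ne_zero, hpdeg]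
  let Φ : W →ₗ[ℝ] Polynomial.degreeLT ℝ n :=
    LinearMap.codRestrict _ ((Polynomial.modByMonicHom p).comp W.subtype) hdegLT
  haveI : FiniteDimensional ℝ (Polynomial.degreeLT ℝ n) :=
    LinearEquiv.finiteDimensional (Polynomial.degreeLTEquiv ℝ n).symm
  have hrank := LinearMap.finrank_range_add_finrank_ker Φ
  have h1 : Module.finrank ℝ (LinearMap.range Φ) ≤ n := by
    have := Submodule.finrank_le (LinearMap.range Φ)
    rwa [(Polynomial.degreeLTEquiv ℝ n).finrank_eq, Module.finrank_fin_fun] at this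
  have h2 : Module.finrank ℝ (LinearMap.ker Φ) ≤ 1 := by
    have hmap : (LinearMap.ker Φ).map W.subtype ≤ Submodule.span ℝ {f} := by
      rintro g ⟨⟨g', hg'W⟩, hgk, rfl⟩
      have hmod : g' %ₘ p = 0 := by
        have := congrArg (Subtype.val) (LinearMap.mem_ker.1 hgk)
        exact this
      obtain ⟨c, hc⟩ := hker g' hg'W ((modByMonic_eq_zero_iff_dvd hpm).1 hmod)
      rw [Submodule.mem_span_singleton]
      exact ⟨c, by simp [hc]⟩
    calc Module.finrank ℝ (LinearMap.ker Φ)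
        = Module.finrank ℝ ((LinearMap.ker Φ).map W.subtype) :=
          (Submodule.finrank_map_subtype_eq W _).symm
      _ ≤ Module.finrank ℝ (Submodule.span ℝ ({f} : Set ℝ[X])) := Submodule.finrank_mono hmap
      _ = 1 := finrank_span_singleton hf0
  omega
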